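/- Every hollow lattice polygon in ℝ² is unimodularly equivalent either to twice the standard triangle, conv{(0,0),(2,0),(0,2)}, or to a lattice polygon contained in the strip ℝ × [0,1] (a Cayley product of two line segments). -/

import Mathlib

/-- The embedding of the lattice `ℤ²` into `ℝ²`. -/
def latticePt (p : ℤ × ℤ) : ℝ × ℝ := ((p.1 : ℝ), (p.2 : ℝ))

/-- A lattice polygon: the convex hull in `ℝ²` of a finite subset of `ℤ²`, with
nonempty interior. -/
def IsLatticePolygon (P : Set (ℝ × ℝ)) : Prop :=
  (∃ S : Finset (ℤ × ℤ), P = convexHull ℝ (latticePt '' (S : Set (ℤ × ℤ)))) ∧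
    (interior P).Nonempty

/-- A lattice polygon is hollow if its interior contains no lattice point. -/
def IsHollow (P : Set (ℝ × ℝ)) : Prop :=
  ∀ p : ℤ × ℤ, latticePt p ∉ interior P

/-- Two subsets of `ℝ²` are unimodularly equivalent if one is the image of the other
under a map `x ↦ Ax + c` with `A ∈ GL₂(ℤ)` (i.e. `det A = ±1`) and `c ∈ ℤ²`. -/
def UnimodEquiv (A B : Set (ℝ × ℝ)) : Prop :=
  ∃ a b c d e f : ℤ, (a * d - b * c = 1 ∨ a * d - b * c = -1) ∧
    B = (fun x : ℝ × ℝ =>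
      ((a : ℝ) * x.1 + (b : ℝ) * x.2 + (e : ℝ), (c : ℝ) * x.1 + (d : ℝ) * x.2 + (f : ℝ))) '' A

/-- Twice the standard triangle, `conv{(0,0),(2,0),(0,2)}`. -/
def twiceStdTriangle : Set (ℝ × ℝ) :=
  convexHull ℝ {((0 : ℝ), (0 : ℝ)), ((2 : ℝ), (0 : ℝ)), ((0 : ℝ), (2 : ℝ))}


def umap (a b c d e f : ℤ) : ℝ × ℝ → ℝ × ℝ := fun x =>
  ((a : ℝ) * x.1 + (b : ℝ) * x.2 + (e : ℝ), (c : ℝ) * x.1 + (d : ℝ) * x.2 + (f : ℝ))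

def zmap (a b c d e f : ℤ) : ℤ × ℤ → ℤ × ℤ := fun p =>
  (a * p.1 + b * p.2 + e, c * p.1 + d * p.2 + f)

lemma umap_latticePt (a b c d e f : ℤ) (p : ℤ × ℤ) :
    umap a b c d e f (latticePt p) = latticePt (zmap a b c d e f p) := by
  unfold umap zmap latticePt
  simp only [Prod.ext_iff]
  exact ⟨by push_cast; ring, by push_cast; ring⟩

noncomputable def uaff (a b c d e f : ℤ) : (ℝ × ℝ) →ᵃ[ℝ] (ℝ × ℝ) :=
  AffineMap.mk' (umap a b c d e f)
    ((((a:ℝ) • (LinearMap.fst ℝ ℝ ℝ) + (b:ℝ) • (LinearMap.snd ℝ ℝ ℝ)).prod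
      ((c:ℝ) • (LinearMap.fst ℝ ℝ ℝ) + (d:ℝ) • (LinearMap.snd ℝ ℝ ℝ)))) 0
    (by
      intro p
      unfold umap
      simp [Prod.ext_iff]
      try constructor <;> ring)

lemma uaff_coe (a b c d e f : ℤ) : ⇑(uaff a b c d e f) = umap a b c d e f := rfl

lemma umap_image_hull (a b c d e f : ℤ) (s : Set (ℝ × ℝ)) :
    umap a b c d e f '' (convexHull ℝ s) = convexHull ℝ (umap a b c d e f '' s) := by
  have := AffineMap.image_convexHull (uaff a b c d e f) s
  rw [uaff_coe] at this
  exact this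
noncomputable section

def ia (a b c d : ℤ) : ℤ := (a*d - b*c) * d
def ib (a b c d : ℤ) : ℤ := -((a*d - b*c) * b)
def ic (a b c d : ℤ) : ℤ := -((a*d - b*c) * c)
def id' (a b c d : ℤ) : ℤ := (a*d - b*c) * a
def ie (a b c d e f : ℤ) : ℤ := -((a*d - b*c) * d * e - (a*d - b*c) * b * f)
def if' (a b c d e f : ℤ) : ℤ := -(-((a*d - b*c) * c) * e + (a*d - b*c) * a * f)

lemma det_sq (a b c d : ℤ) (h : a*d - b*c = 1 ∨ a*d - b*c = -1) :
    (a*d - b*c) * (a*d - b*c) = 1 := by rcases h with h | h <;> rw [h] <;> ring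

lemma zmap_inv (a b c d e f : ℤ) (h : a*d - b*c = 1 ∨ a*d - b*c = -1) (p : ℤ × ℤ) :
    zmap (ia a b c d) (ib a b c d) (ic a b c d) (id' a b c d)
      (ie a b c d e f) (if' a b c d e f) (zmap a b c d e f p) = p := by
  have h1 := det_sq a b c d h
  unfold zmap ia ib ic id' ie if'
  simp only [Prod.ext_iff]
  constructor
  · linear_combination p.1 * h1
  · linear_combination p.2 * h1


lemma zmap_inv' (a b c d e f : ℤ) (h : a*d - b*c = 1 ∨ a*d - b*c = -1) (p : ℤ × ℤ) :
    zmap a b c d e f (zmap (ia a b c d) (ib a b c d) (ic a b c d) (id' a b c d)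
      (ie a b c d e f) (if' a b c d e f) p) = p := by
  have h1 := det_sq a b c d h
  unfold zmap ia ib ic id' ie if'
  simp only [Prod.ext_iff]
  constructor
  · linear_combination (p.1 - e) * h1
  · linear_combination (p.2 - f) * h1

lemma umap_inv (a b c d e f : ℤ) (h : a*d - b*c = 1 ∨ a*d - b*c = -1) (z : ℝ × ℝ) :
    umap (ia a b c d) (ib a b c d) (ic a b c d) (id' a b c d)
      (ie a b c d e f) (if' a b c d e f) (umap a b c d e f z) = z := by
  have h1 : ((a:ℝ)*d - b*c) * ((a:ℝ)*d - b*c) = 1 := by exact_mod_cast det_sq a b c d h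
  unfold umap ia ib ic id' ie if'
  simp only [Prod.ext_iff]
  constructor
  · push_cast; linear_combination z.1 * h1
  · push_cast; linear_combination z.2 * h1

lemma umap_inv' (a b c d e f : ℤ) (h : a*d - b*c = 1 ∨ a*d - b*c = -1) (z : ℝ × ℝ) :
    umap a b c d e f (umap (ia a b c d) (ib a b c d) (ic a b c d) (id' a b c d)
      (ie a b c d e f) (if' a b c d e f) z) = z := by
  have h1 : ((a:ℝ)*d - b*c) * ((a:ℝ)*d - b*c) = 1 := by exact_mod_cast det_sq a b c d h
  unfold umap ia ib ic id' ie if'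
  simp only [Prod.ext_iff]
  constructor
  · push_cast; linear_combination (z.1 - (e:ℝ)) * h1
  · push_cast; linear_combination (z.2 - (f:ℝ)) * h1

lemma umap_continuous (a b c d e f : ℤ) : Continuous (umap a b c d e f) := by
  unfold umap; fun_prop

def uhomeo (a b c d e f : ℤ) (h : a*d - b*c = 1 ∨ a*d - b*c = -1) : (ℝ × ℝ) ≃ₜ (ℝ × ℝ) where
  toFun := umap a b c d e f
  invFun := umap (ia a b c d) (ib a b c d) (ic a b c d) (id' a b c d)
      (ie a b c d e f) (if' a b c d e f)
  left_inv := umap_inv a b c d e f h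
  right_inv := umap_inv' a b c d e f h
  continuous_toFun := umap_continuous a b c d e f
  continuous_invFun := umap_continuous _ _ _ _ _ _

lemma umap_image_interior (a b c d e f : ℤ) (h : a*d - b*c = 1 ∨ a*d - b*c = -1)
    (Q : Set (ℝ × ℝ)) :
    umap a b c d e f '' interior Q = interior (umap a b c d e f '' Q) :=
  (uhomeo a b c d e f h).image_interior Q

lemma umap_injective (a b c d e f : ℤ) (h : a*d - b*c = 1 ∨ a*d - b*c = -1) :
    Function.Injective (umap a b c d e f) :=
  (uhomeo a b c d e f h).injective

end
lemma hull_le (S : Set (ℝ × ℝ)) (α β c : ℝ) (h : ∀ z ∈ S, α * z.1 + β * z.2 ≤ c) :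
    ∀ z ∈ convexHull ℝ S, α * z.1 + β * z.2 ≤ c := by
  intro z hz
  have hconv : Convex ℝ {z : ℝ × ℝ | α * z.1 + β * z.2 ≤ c} := by
    intro x hx y hy s t hs ht hst
    simp only [Set.mem_setOf_eq] at hx hy ⊢
    have e1 : (s • x + t • y).1 = s * x.1 + t * y.1 := rfl
    have e2 : (s • x + t • y).2 = s * x.2 + t * y.2 := rfl
    rw [e1, e2]
    have key : α * (s * x.1 + t * y.1) + β * (s * x.2 + t * y.2)
        = s * (α * x.1 + β * x.2) + t * (α * y.1 + β * y.2) := by ring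
    rw [key]
    have hc : s * c + t * c = c := by rw [← add_mul, hst, one_mul]
    nlinarith [mul_le_mul_of_nonneg_left hx hs, mul_le_mul_of_nonneg_left hy ht]
  exact convexHull_min h hconv hz

lemma seg_mem {P : Set (ℝ × ℝ)} (hP : Convex ℝ P) {p q : ℝ × ℝ} (hp : p ∈ P) (hq : q ∈ P)
    {h u : ℝ} (hpy : p.2 = h) (hqy : q.2 = h) (h1 : p.1 ≤ u) (h2 : u ≤ q.1) : (u, h) ∈ P := by
  rcases eq_or_lt_of_le (h1.trans h2) with heq | hlt
  · have : (u, h) = p := by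
      have : p.1 = u := le_antisymm h1 (by rw [heq]; exact h2)
      exact Prod.ext this.symm hpy.symm
    rw [this]; exact hp
  · set t : ℝ := (u - p.1) / (q.1 - p.1) with ht
    have hden : 0 < q.1 - p.1 := by linarith
    have ht0 : 0 ≤ t := div_nonneg (by linarith) (by linarith)
    have ht1 : t ≤ 1 := by rw [div_le_one hden]; linarith
    have := hP hp hq (by linarith : (0:ℝ) ≤ 1 - t) ht0 (by ring)
    have e1 : ((1 - t) • p + t • q).1 = (1 - t) * p.1 + t * q.1 := rfl
    have e2 : ((1 - t) • p + t • q).2 = (1 - t) * p.2 + t * q.2 := rfl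
    have hx : (1 - t) * p.1 + t * q.1 = u := by
      have key : t * (q.1 - p.1) = u - p.1 := by rw [ht]; exact div_mul_cancel₀ _ hden.ne'
      linear_combination key
    have hy : (1 - t) * p.2 + t * q.2 = h := by rw [hpy, hqy]; ring
    have : ((1 - t) • p + t • q) = (u, h) := Prod.ext (by rw [e1, hx]) (by rw [e2, hy])
    rw [← this]
    exact hP hp hq (by linarith) ht0 (by ring)

lemma helper_up {P : Set (ℝ × ℝ)} (hP : Convex ℝ P) {p q s : ℝ × ℝ}
    (hp : p ∈ P) (hq : q ∈ P) (hs : s ∈ P) {x h : ℝ}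
    (hpy : p.2 = h) (hqy : q.2 = h) (h1 : p.1 < x) (h2 : x < q.1) (hsy : h < s.2) :
    ∃ ε > 0, ∀ x' y' : ℝ, |x' - x| < ε → h ≤ y' → y' - h < ε → (x', y') ∈ P := by
  set D : ℝ := s.2 - h with hD
  have hD0 : 0 < D := by simp [hD]; linarith
  set C : ℝ := |s.1 - x| with hC
  have hC0 : 0 ≤ C := abs_nonneg _
  set δ : ℝ := min (x - p.1) (q.1 - x) with hδ
  have hδ0 : 0 < δ := lt_min (by linarith) (by linarith)
  refine ⟨min (D / 2) (δ * D / (2 * (D + C))), lt_min (by positivity) (by positivity), ?_⟩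
  intro x' y' hx' hy1 hy2
  set ε : ℝ := min (D / 2) (δ * D / (2 * (D + C))) with hε
  have hεD : ε ≤ D / 2 := min_le_left _ _
  have hεδ : ε ≤ δ * D / (2 * (D + C)) := min_le_right _ _
  set t : ℝ := (y' - h) / D with htdef
  have ht0 : 0 ≤ t := div_nonneg (by linarith) hD0.le
  have ht5 : t ≤ 1 / 2 := by
    rw [htdef, div_le_iff₀ hD0]
    have : y' - h < D / 2 := lt_of_lt_of_le hy2 hεD
    linarith
  have h1t : (1:ℝ) / 2 ≤ 1 - t := by linarith
  have h1t0 : (0:ℝ) < 1 - t := by linarith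
  set u : ℝ := (x' - t * s.1) / (1 - t) with hu
  have hux : u - x = ((x' - x) - t * (s.1 - x)) / (1 - t) := by
    rw [hu]; field_simp; ring
  have habs : |u - x| ≤ δ := by
    have e1 : |(x' - x) - t * (s.1 - x)| ≤ |x' - x| + t * C := by
      calc |(x' - x) - t * (s.1 - x)| ≤ |x' - x| + |t * (s.1 - x)| := abs_sub _ _
        _ = |x' - x| + t * C := by rw [abs_mul, abs_of_nonneg ht0, hC]
    have htD : t * D ≤ ε := by
      have : t * D = y' - h := by rw [htdef]; field_simp
      linarith
    have e4 : ε * (2 * (D + C)) ≤ δ * D := by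
      have h' := hεδ
      rw [le_div_iff₀ (by positivity)] at h'
      linarith
    have key2 : (ε + t * C) * D ≤ (δ / 2) * D := by
      nlinarith [mul_le_mul_of_nonneg_right htD hC0]
    have key3 : ε + t * C ≤ δ / 2 := (mul_le_mul_iff_left₀ hD0).mp key2
    have key4 : δ * (1 / 2) ≤ δ * (1 - t) := mul_le_mul_of_nonneg_left h1t hδ0.le
    rw [hux, abs_div, abs_of_pos h1t0, div_le_iff₀ h1t0]
    have e3 : |x' - x| < ε := hx'
    nlinarith
  have hu1 : p.1 ≤ u := by
    have : δ ≤ x - p.1 := min_le_left _ _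
    have := abs_le.1 habs
    linarith [this.1]
  have hu2 : u ≤ q.1 := by
    have : δ ≤ q.1 - x := min_le_right _ _
    have := abs_le.1 habs
    linarith [this.2]
  have humem : ((u, h) : ℝ × ℝ) ∈ P := seg_mem hP hp hq hpy hqy hu1 hu2
  have := hP humem hs (by linarith : (0:ℝ) ≤ 1 - t) ht0 (by ring)
  have e1 : ((1 - t) • ((u, h) : ℝ × ℝ) + t • s).1 = (1 - t) * u + t * s.1 := rfl
  have e2 : ((1 - t) • ((u, h) : ℝ × ℝ) + t • s).2 = (1 - t) * h + t * s.2 := rfl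
  have hxx : (1 - t) * u + t * s.1 = x' := by rw [hu]; field_simp; ring
  have hyy : (1 - t) * h + t * s.2 = y' := by
    rw [htdef]; field_simp; ring
  have : ((1 - t) • ((u, h) : ℝ × ℝ) + t • s) = (x', y') :=
    Prod.ext (by rw [e1, hxx]) (by rw [e2, hyy])
  rw [← this]
  exact hP humem hs (by linarith) ht0 (by ring)

lemma helper_down {P : Set (ℝ × ℝ)} (hP : Convex ℝ P) {p q s : ℝ × ℝ}
    (hp : p ∈ P) (hq : q ∈ P) (hs : s ∈ P) {x h : ℝ}
    (hpy : p.2 = h) (hqy : q.2 = h) (h1 : p.1 < x) (h2 : x < q.1) (hsy : s.2 < h) :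
    ∃ ε > 0, ∀ x' y' : ℝ, |x' - x| < ε → y' ≤ h → h - y' < ε → (x', y') ∈ P := by
  set D : ℝ := h - s.2 with hD
  have hD0 : 0 < D := by simp [hD]; linarith
  set C : ℝ := |s.1 - x| with hC
  have hC0 : 0 ≤ C := abs_nonneg _
  set δ : ℝ := min (x - p.1) (q.1 - x) with hδ
  have hδ0 : 0 < δ := lt_min (by linarith) (by linarith)
  refine ⟨min (D / 2) (δ * D / (2 * (D + C))), lt_min (by positivity) (by positivity), ?_⟩
  intro x' y' hx' hy1 hy2
  set ε : ℝ := min (D / 2) (δ * D / (2 * (D + C))) with hε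
  have hεD : ε ≤ D / 2 := min_le_left _ _
  have hεδ : ε ≤ δ * D / (2 * (D + C)) := min_le_right _ _
  set t : ℝ := (h - y') / D with htdef
  have ht0 : 0 ≤ t := div_nonneg (by linarith) hD0.le
  have ht5 : t ≤ 1 / 2 := by
    rw [htdef, div_le_iff₀ hD0]
    have : h - y' < D / 2 := lt_of_lt_of_le hy2 hεD
    linarith
  have h1t : (1:ℝ) / 2 ≤ 1 - t := by linarith
  have h1t0 : (0:ℝ) < 1 - t := by linarith
  set u : ℝ := (x' - t * s.1) / (1 - t) with hu
  have hux : u - x = ((x' - x) - t * (s.1 - x)) / (1 - t) := by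
    rw [hu]; field_simp; ring
  have habs : |u - x| ≤ δ := by
    have e1 : |(x' - x) - t * (s.1 - x)| ≤ |x' - x| + t * C := by
      calc |(x' - x) - t * (s.1 - x)| ≤ |x' - x| + |t * (s.1 - x)| := abs_sub _ _
        _ = |x' - x| + t * C := by rw [abs_mul, abs_of_nonneg ht0, hC]
    have htD : t * D ≤ ε := by
      have : t * D = h - y' := by rw [htdef]; field_simp
      linarith
    have e4 : ε * (2 * (D + C)) ≤ δ * D := by
      have h' := hεδ
      rw [le_div_iff₀ (by positivity)] at h'
      linarith
    have key2 : (ε + t * C) * D ≤ (δ / 2) * D := by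
      nlinarith [mul_le_mul_of_nonneg_right htD hC0]
    have key3 : ε + t * C ≤ δ / 2 := (mul_le_mul_iff_left₀ hD0).mp key2
    have key4 : δ * (1 / 2) ≤ δ * (1 - t) := mul_le_mul_of_nonneg_left h1t hδ0.le
    rw [hux, abs_div, abs_of_pos h1t0, div_le_iff₀ h1t0]
    have e3 : |x' - x| < ε := hx'
    nlinarith
  have hu1 : p.1 ≤ u := by
    have : δ ≤ x - p.1 := min_le_left _ _
    have := abs_le.1 habs
    linarith [this.1]
  have hu2 : u ≤ q.1 := by
    have : δ ≤ q.1 - x := min_le_right _ _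
    have := abs_le.1 habs
    linarith [this.2]
  have humem : ((u, h) : ℝ × ℝ) ∈ P := seg_mem hP hp hq hpy hqy hu1 hu2
  have := hP humem hs (by linarith : (0:ℝ) ≤ 1 - t) ht0 (by ring)
  have e1 : ((1 - t) • ((u, h) : ℝ × ℝ) + t • s).1 = (1 - t) * u + t * s.1 := rfl
  have e2 : ((1 - t) • ((u, h) : ℝ × ℝ) + t • s).2 = (1 - t) * h + t * s.2 := rfl
  have hxx : (1 - t) * u + t * s.1 = x' := by rw [hu]; field_simp; ring
  have hyy : (1 - t) * h + t * s.2 = y' := by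
    rw [htdef]; field_simp; ring
  have : ((1 - t) • ((u, h) : ℝ × ℝ) + t • s) = (x', y') :=
    Prod.ext (by rw [e1, hxx]) (by rw [e2, hyy])
  rw [← this]
  exact hP humem hs (by linarith) ht0 (by ring)

lemma quad_interior {P : Set (ℝ × ℝ)} (hP : Convex ℝ P) {p q r s : ℝ × ℝ}
    (hp : p ∈ P) (hq : q ∈ P) (hr : r ∈ P) (hs : s ∈ P) {x h : ℝ}
    (hpy : p.2 = h) (hqy : q.2 = h) (h1 : p.1 < x) (h2 : x < q.1)
    (hry : r.2 < h) (hsy : h < s.2) : (x, h) ∈ interior P := by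
  obtain ⟨ε₁, hε₁, H₁⟩ := helper_up hP hp hq hs hpy hqy h1 h2 hsy
  obtain ⟨ε₂, hε₂, H₂⟩ := helper_down hP hp hq hr hpy hqy h1 h2 hry
  rw [mem_interior]
  refine ⟨Metric.ball (x, h) (min ε₁ ε₂), ?_, Metric.isOpen_ball,
    Metric.mem_ball_self (lt_min hε₁ hε₂)⟩
  intro z hz
  rw [Metric.mem_ball, Prod.dist_eq, max_lt_iff, Real.dist_eq, Real.dist_eq] at hz
  obtain ⟨hz1, hz2⟩ := hz
  have hx1 : |z.1 - x| < ε₁ := lt_of_lt_of_le hz1 (by exact (min_le_left _ _))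
  have hx2 : |z.1 - x| < ε₂ := lt_of_lt_of_le hz1 (by exact (min_le_right _ _))
  have := abs_lt.1 hz2
  rcases le_total h z.2 with hy | hy
  · have := H₁ z.1 z.2 hx1 hy (by cases abs_lt.1 (lt_of_lt_of_le hz2 (min_le_left _ _)) with
      | intro a b => linarith)
    simpa using this
  · have := H₂ z.1 z.2 hx2 hy (by cases abs_lt.1 (lt_of_lt_of_le hz2 (min_le_right _ _)) with
      | intro a b => linarith)
    simpa using this
lemma chord_mem (S : Finset (ℤ × ℤ)) {p q : ℤ × ℤ} (hp : p ∈ S) (hq : q ∈ S)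
    {t : ℝ} (h0 : 0 ≤ t) (h1 : t ≤ 1) :
    (((1 - t) * p.1 + t * q.1, (1 - t) * p.2 + t * q.2) : ℝ × ℝ)
      ∈ convexHull ℝ (latticePt '' (S : Set (ℤ × ℤ))) := by
  have hps : latticePt p ∈ convexHull ℝ (latticePt '' (S : Set (ℤ × ℤ))) :=
    subset_convexHull _ _ ⟨p, by simpa using hp, rfl⟩
  have hqs : latticePt q ∈ convexHull ℝ (latticePt '' (S : Set (ℤ × ℤ))) :=
    subset_convexHull _ _ ⟨q, by simpa using hq, rfl⟩
  have := (convex_convexHull ℝ (latticePt '' (S : Set (ℤ × ℤ)))) hps hqs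
    (by linarith : (0:ℝ) ≤ 1 - t) h0 (by ring)
  convert this using 1
  rfl

lemma int_between {u v : ℝ} (h : u + 1 < v) : ∃ n : ℤ, u < (n : ℝ) ∧ (n : ℝ) < v := by
  refine ⟨⌊u⌋ + 1, ?_, ?_⟩
  · push_cast; exact Int.lt_floor_add_one u
  · push_cast
    have := Int.floor_le u
    linarith

lemma shear_exists (w v : ℤ) (hw : 1 ≤ w) :
    ∃ n : ℤ, -w < 2 * (v + n * w) ∧ 2 * (v + n * w) ≤ w := by
  have h0 : 0 ≤ v % w := Int.emod_nonneg v (by omega)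
  have h1 : v % w < w := Int.emod_lt_of_pos v (by omega)
  by_cases hc : 2 * (v % w) ≤ w
  · refine ⟨-(v / w), ?_, ?_⟩ <;>
    · have : v + -(v / w) * w = v % w := by
        linear_combination (-1 : ℤ) * Int.mul_ediv_add_emod v w
      rw [this]; omega
  · refine ⟨-(v / w) - 1, ?_, ?_⟩ <;>
    · have : v + (-(v / w) - 1) * w = v % w - w := by
        linear_combination (-1 : ℤ) * Int.mul_ediv_add_emod v w
      rw [this]; omega

lemma unimodEquiv_of_umap (a b c d e f : ℤ) (h : a * d - b * c = 1 ∨ a * d - b * c = -1)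
    (Q : Set (ℝ × ℝ)) : UnimodEquiv Q (umap a b c d e f '' Q) :=
  ⟨a, b, c, d, e, f, h, rfl⟩

lemma unimodEquiv_trans {A B C : Set (ℝ × ℝ)} (h1 : UnimodEquiv A B) (h2 : UnimodEquiv B C) :
    UnimodEquiv A C := by
  obtain ⟨a₁, b₁, c₁, d₁, e₁, f₁, h₁, rfl⟩ := h1
  obtain ⟨a₂, b₂, c₂, d₂, e₂, f₂, h₂, rfl⟩ := h2
  refine ⟨a₂*a₁+b₂*c₁, a₂*b₁+b₂*d₁, c₂*a₁+d₂*c₁, c₂*b₁+d₂*d₁,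
          a₂*e₁+b₂*f₁+e₂, c₂*e₁+d₂*f₁+f₂, ?_, ?_⟩
  · have key : (a₂*a₁+b₂*c₁)*(c₂*b₁+d₂*d₁) - (a₂*b₁+b₂*d₁)*(c₂*a₁+d₂*c₁)
        = (a₁*d₁ - b₁*c₁)*(a₂*d₂ - b₂*c₂) := by ring
    rcases h₁ with h₁ | h₁ <;> rcases h₂ with h₂ | h₂ <;> rw [key, h₁, h₂] <;> norm_num
  · rw [Set.image_image]
    apply Set.image_congr'
    intro z
    simp only [Prod.ext_iff]
    constructor <;> push_cast <;> ring

lemma umap_image_polygon (a b c d e f : ℤ) (h : a * d - b * c = 1 ∨ a * d - b * c = -1)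
    {Q : Set (ℝ × ℝ)} {S : Finset (ℤ × ℤ)}
    (hQ : Q = convexHull ℝ (latticePt '' (S : Set (ℤ × ℤ)))) :
    umap a b c d e f '' Q
      = convexHull ℝ (latticePt '' ((S.image (zmap a b c d e f)) : Set (ℤ × ℤ))) := by
  rw [hQ, umap_image_hull]
  congr 1
  rw [Finset.coe_image, ← Set.image_comp, ← Set.image_comp]
  apply Set.image_congr'
  intro p
  exact umap_latticePt a b c d e f p

lemma umap_interior_nonempty (a b c d e f : ℤ) (h : a * d - b * c = 1 ∨ a * d - b * c = -1)
    {Q : Set (ℝ × ℝ)} (hne : (interior Q).Nonempty) :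
    (interior (umap a b c d e f '' Q)).Nonempty := by
  rw [← umap_image_interior a b c d e f h]
  exact hne.image _

lemma umap_hollow (a b c d e f : ℤ) (h : a * d - b * c = 1 ∨ a * d - b * c = -1)
    {Q : Set (ℝ × ℝ)} (hhol : IsHollow Q) : IsHollow (umap a b c d e f '' Q) := by
  intro p hp
  rw [← umap_image_interior a b c d e f h] at hp
  obtain ⟨z, hz, hz2⟩ := hp
  set q := zmap (ia a b c d) (ib a b c d) (ic a b c d) (id' a b c d)
    (ie a b c d e f) (if' a b c d e f) p with hq
  have hinv : zmap a b c d e f q = p := zmap_inv' a b c d e f h p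
  have h2 : umap a b c d e f (latticePt q) = latticePt p := by
    rw [umap_latticePt, hinv]
  have h3 : z = latticePt q := umap_injective a b c d e f h (by rw [hz2, h2])
  exact hhol q (h3 ▸ hz)
lemma no_between {S : Finset (ℤ × ℤ)} {Q : Set (ℝ × ℝ)}
    (hQ : Q = convexHull ℝ (latticePt '' (S : Set (ℤ × ℤ)))) (hhol : IsHollow Q)
    {z z' r s : ℝ × ℝ} (hz : z ∈ Q) (hz' : z' ∈ Q) (hr : r ∈ Q) (hs : s ∈ Q)
    (x k : ℤ) (hzy : z.2 = (k : ℝ)) (hz'y : z'.2 = (k : ℝ))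
    (hry : r.2 < (k : ℝ)) (hsy : (k : ℝ) < s.2)
    (h1 : z.1 < (x : ℝ)) (h2 : (x : ℝ) < z'.1) : False := by
  have hconv : Convex ℝ Q := hQ ▸ convex_convexHull ℝ _
  exact hhol (x, k) (quad_interior hconv hz hz' hr hs hzy hz'y h1 h2 hry hsy)

lemma core (w : ℤ) (hw : 2 ≤ w) (S : Finset (ℤ × ℤ)) (Q : Set (ℝ × ℝ))
    (hQ : Q = convexHull ℝ (latticePt '' (S : Set (ℤ × ℤ))))
    (hhol : IsHollow Q)
    (hS : ∀ p ∈ S, 0 ≤ p.2 ∧ p.2 ≤ w)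
    (β τ m : ℤ) (hβ0 : 0 ≤ β) (hτ0 : 0 ≤ τ) (hτβ : τ ≤ β)
    (hb0 : ((0 : ℤ), (0 : ℤ)) ∈ S) (hb1 : ((β, (0:ℤ)) : ℤ × ℤ) ∈ S)
    (hbr : ∀ p ∈ S, p.2 = 0 → 0 ≤ p.1 ∧ p.1 ≤ β)
    (ht0 : ((m, w) : ℤ × ℤ) ∈ S) (ht1 : ((m + τ, w) : ℤ × ℤ) ∈ S)
    (htr : ∀ p ∈ S, p.2 = w → m ≤ p.1 ∧ p.1 ≤ m + τ)
    (hm1 : -w < 2 * m) (hm2 : 2 * m ≤ w) :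
    (∃ lo : ℤ, ∀ p ∈ S, lo ≤ p.1 ∧ p.1 ≤ lo + (w - 1)) ∨
      (w = 2 ∧ β = 2 ∧ τ = 0 ∧ m = 0 ∧ ∀ p ∈ S, 0 ≤ p.1 ∧ p.1 + p.2 ≤ 2) := by
  have hwR : (0 : ℝ) < (w : ℝ) := by exact_mod_cast (by omega : (0:ℤ) < w)
  have hmem : ∀ p ∈ S, latticePt p ∈ Q := by
    intro p hp
    rw [hQ]
    exact subset_convexHull _ _ ⟨p, by simpa using hp, rfl⟩
  -- low chord points
  have hcl : ∀ k : ℤ, 0 ≤ k → k ≤ w → ((((k * m : ℤ) : ℝ) / w, (k : ℝ)) : ℝ × ℝ) ∈ Q := by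
    intro k h0 h1
    have ht0' : (0:ℝ) ≤ (k:ℝ)/w := div_nonneg (by exact_mod_cast h0) hwR.le
    have ht1' : (k:ℝ)/w ≤ 1 := by rw [div_le_one hwR]; exact_mod_cast h1
    have hh := chord_mem S hb0 ht0 ht0' ht1'
    have e : ((1 - (k:ℝ)/w) * ((((0:ℤ),(0:ℤ)) : ℤ × ℤ).1 : ℝ) + (k:ℝ)/w * ((((m, w)) : ℤ × ℤ).1 : ℝ),
        (1 - (k:ℝ)/w) * ((((0:ℤ),(0:ℤ)) : ℤ × ℤ).2 : ℝ) + (k:ℝ)/w * ((((m, w)) : ℤ × ℤ).2 : ℝ))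
        = ((((k * m : ℤ) : ℝ) / w, (k : ℝ)) : ℝ × ℝ) := by
      simp only [Prod.ext_iff]
      constructor <;> (push_cast; try field_simp; try ring)
    rw [hQ, ← e]
    exact hh
  -- high chord points
  have hch : ∀ k : ℤ, 0 ≤ k → k ≤ w →
      (((((w - k) * β + k * (m + τ) : ℤ) : ℝ) / w, (k : ℝ)) : ℝ × ℝ) ∈ Q := by
    intro k h0 h1
    have ht0' : (0:ℝ) ≤ (k:ℝ)/w := div_nonneg (by exact_mod_cast h0) hwR.le
    have ht1' : (k:ℝ)/w ≤ 1 := by rw [div_le_one hwR]; exact_mod_cast h1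
    have hh := chord_mem S hb1 ht1 ht0' ht1'
    have e : ((1 - (k:ℝ)/w) * ((((β,(0:ℤ)) : ℤ × ℤ)).1 : ℝ) + (k:ℝ)/w * ((((m + τ, w)) : ℤ × ℤ).1 : ℝ),
        (1 - (k:ℝ)/w) * ((((β,(0:ℤ)) : ℤ × ℤ)).2 : ℝ) + (k:ℝ)/w * ((((m + τ, w)) : ℤ × ℤ).2 : ℝ))
        = ((((((w - k) * β + k * (m + τ) : ℤ) : ℝ) / w, (k : ℝ))) : ℝ × ℝ) := by
      simp only [Prod.ext_iff]
      constructor <;> (push_cast; try field_simp; try ring)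
    rw [hQ, ← e]
    exact hh
  -- generic hollowness contradiction at intermediate heights
  have GH : ∀ (z z' : ℝ × ℝ), z ∈ Q → z' ∈ Q → ∀ (x k : ℤ), 1 ≤ k → k ≤ w - 1 →
      z.2 = (k : ℝ) → z'.2 = (k : ℝ) → z.1 < (x : ℝ) → (x : ℝ) < z'.1 → False := by
    intro z z' hz hz' x k hk1 hk2 hzy hz'y h1 h2
    refine no_between hQ hhol hz hz' (hmem _ hb0) (hmem _ ht0) x k hzy hz'y ?_ ?_ h1 h2
    · show ((0:ℤ):ℝ) < (k:ℝ); exact_mod_cast (by omega : (0:ℤ) < k)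
    · show ((k:ℝ)) < ((w:ℤ):ℝ); exact_mod_cast (by omega : k < w)
  -- slice bound: (w-1)β + τ ≤ w
  have hβτ : (w - 1) * β + τ ≤ w := by
    by_contra hcon
    push_neg at hcon
    have hconR : (w:ℝ) < ((w:ℝ) - 1) * β + τ := by
      have : ((w:ℝ)) < (((w-1) * β + τ : ℤ) : ℝ) := by exact_mod_cast hcon
      push_cast at this
      linarith
    have hgap : ((1 * m : ℤ) : ℝ) / w + 1 < (((w - 1) * β + 1 * (m + τ) : ℤ) : ℝ) / w := by
      rw [div_add' _ _ _ hwR.ne', div_lt_div_iff₀ hwR hwR]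
      push_cast
      nlinarith [mul_pos hwR (show (0:ℝ) < ((w:ℝ) - 1) * β + τ - w by linarith)]
    obtain ⟨ξ, hξ1, hξ2⟩ := int_between hgap
    exact GH _ _ (hcl 1 (by omega) (by omega)) (hch 1 (by omega) (by omega)) ξ 1
      (by omega) (by omega) rfl rfl hξ1 hξ2
  -- row bounds for intermediate rows, integer form
  have hrow : ∀ p ∈ S, 1 ≤ p.2 → p.2 ≤ w - 1 →
      w * p.1 ≤ p.2 * m + w ∧ p.2 * m - w ≤ w * p.1 := by
    intro p hp hk1 hk2
    constructor
    · by_contra hcon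
      push_neg at hcon
      have hx : ((p.2 * m : ℤ) : ℝ) / w < ((p.1 - 1 : ℤ) : ℝ) := by
        rw [div_lt_iff₀ hwR]
        have : (p.2 * m + w : ℝ) < (w : ℝ) * p.1 := by exact_mod_cast hcon
        push_cast
        push_cast at this
        nlinarith
      refine GH _ _ (hcl p.2 (by omega) (by omega)) (hmem p hp) (p.1 - 1) p.2
        (by omega) (by omega) rfl rfl hx ?_
      show ((p.1 - 1 : ℤ) : ℝ) < ((p.1 : ℤ) : ℝ)
      exact_mod_cast (by omega : p.1 - 1 < p.1)
    · by_contra hcon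
      push_neg at hcon
      have hβR : (0:ℝ) ≤ ((w - p.2 : ℤ) : ℝ) * β := by
        have h1' : (0:ℝ) ≤ ((w - p.2 : ℤ) : ℝ) := by exact_mod_cast (by omega : (0:ℤ) ≤ w - p.2)
        exact mul_nonneg h1' (by exact_mod_cast hβ0)
      have hτR : (0:ℝ) ≤ (p.2 : ℝ) * τ := by
        have h1' : (0:ℝ) ≤ (p.2 : ℝ) := by exact_mod_cast (by omega : (0:ℤ) ≤ p.2)
        exact mul_nonneg h1' (by exact_mod_cast hτ0)
      have hx : ((p.1 + 1 : ℤ) : ℝ) < (((w - p.2) * β + p.2 * (m + τ) : ℤ) : ℝ) / w := by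
        rw [lt_div_iff₀ hwR]
        have : (w : ℝ) * p.1 < (p.2 * m - w : ℝ) := by exact_mod_cast hcon
        push_cast
        push_cast at this hβR hτR
        nlinarith
      refine GH _ _ (hmem p hp) (hch p.2 (by omega) (by omega)) (p.1 + 1) p.2
        (by omega) (by omega) rfl rfl ?_ hx
      show ((p.1 : ℤ) : ℝ) < ((p.1 + 1 : ℤ) : ℝ)
      exact_mod_cast (by omega : p.1 < p.1 + 1)
  rcases lt_or_ge w 3 with hw2 | hw3
  · -- w = 2 case
    have hw2' : w = 2 := by omega
    subst hw2'
    have hβτ2 : β + τ ≤ 2 := by linarith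
    have hm01 : m = 0 ∨ m = 1 := by omega
    -- rule out β + τ = 2 with m = 1
    have hpar : ¬ (β + τ = 2 ∧ m = 1) := by
      rintro ⟨hs2, hm'⟩
      refine GH _ _ (hcl 1 (by omega) (by omega)) (hch 1 (by omega) (by omega)) 1 1
        (by omega) (by omega) rfl rfl ?_ ?_
      · show ((1 * m : ℤ) : ℝ) / ((2:ℤ) : ℝ) < ((1:ℤ) : ℝ)
        rw [div_lt_iff₀ (by norm_num)]
        push_cast
        rw [hm']; norm_num
      · show ((1:ℤ) : ℝ) < (((2 - 1) * β + 1 * (m + τ) : ℤ) : ℝ) / ((2:ℤ) : ℝ)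
        rw [lt_div_iff₀ (by norm_num)]
        push_cast
        rw [hm']
        have hs2R : (β:ℝ) + (τ:ℝ) = 2 := by exact_mod_cast hs2
        push_cast
        linarith
    by_cases hβ2 : β = 2
    · -- the 2Δ case
      have hτ2 : τ = 0 := by omega
      have hm0 : m = 0 := by
        rcases hm01 with h | h
        · exact h
        · exact absurd ⟨by omega, h⟩ hpar
      right
      refine ⟨rfl, hβ2, hτ2, hm0, ?_⟩
      intro p hp
      obtain ⟨hp0, hpw⟩ := hS p hp
      rcases lt_trichotomy p.2 1 with h2 | h2 | h2
      · have h0 : p.2 = 0 := by omega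
        have := hbr p hp h0
        omega
      · -- middle row
        obtain ⟨hu, hl⟩ := hrow p hp (by omega) (by omega)
        rw [hm0] at hu hl
        have hp1 : -1 ≤ p.1 ∧ p.1 ≤ 1 := by omega
        have hnotneg : p.1 ≠ -1 := by
          intro hneg
          refine GH _ _ (hmem p hp) (hch 1 (by omega) (by omega)) 0 1
            (by omega) (by omega) ?_ rfl ?_ ?_
          · show ((p.2 : ℤ) : ℝ) = ((1:ℤ) : ℝ); exact_mod_cast h2
          · show ((p.1 : ℤ) : ℝ) < ((0:ℤ) : ℝ); exact_mod_cast (by omega : p.1 < 0)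
          · show ((0:ℤ) : ℝ) < (((2 - 1) * β + 1 * (m + τ) : ℤ) : ℝ) / ((2:ℤ) : ℝ)
            rw [lt_div_iff₀ (by norm_num)]
            push_cast
            rw [hβ2, hτ2, hm0]; norm_num
        omega
      · have h0 : p.2 = 2 := by omega
        have := htr p hp h0
        omega
    · -- β ≤ 1 : thin cases
      have hβ1 : β ≤ 1 := by omega
      left
      rcases hm01 with hm0 | hm1
      · -- m = 0
        by_cases hneg : (((-1 : ℤ), (1 : ℤ)) : ℤ × ℤ) ∈ S
        · -- β = τ = 0 necessarily, lo = -1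
          have hβτ0 : β + τ = 0 := by
            by_contra hcon
            refine GH _ _ (hmem _ hneg) (hch 1 (by omega) (by omega)) 0 1
              (by omega) (by omega) rfl rfl ?_ ?_
            · show (((-1):ℤ) : ℝ) < ((0:ℤ) : ℝ); norm_num
            · show ((0:ℤ) : ℝ) < (((2 - 1) * β + 1 * (m + τ) : ℤ) : ℝ) / ((2:ℤ) : ℝ)
              rw [lt_div_iff₀ (by norm_num)]
              push_cast
              have h1R : (1:ℝ) ≤ (β:ℝ) + (τ:ℝ) := by
                exact_mod_cast (show (1:ℤ) ≤ β + τ by omega)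
              rw [hm0]
              norm_num
              linarith
          refine ⟨-1, ?_⟩
          intro p hp
          obtain ⟨hp0, hpw⟩ := hS p hp
          rcases lt_trichotomy p.2 1 with h2 | h2 | h2
          · have h0 : p.2 = 0 := by omega
            have := hbr p hp h0; omega
          · obtain ⟨hu, hl⟩ := hrow p hp (by omega) (by omega)
            rw [hm0] at hu hl
            have hnot1 : p.1 ≠ 1 := by
              intro h1'
              refine GH _ _ (hmem _ hneg) (hmem p hp) 0 1
                (by omega) (by omega) rfl ?_ ?_ ?_
              · show ((p.2 : ℤ) : ℝ) = ((1:ℤ) : ℝ); exact_mod_cast h2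
              · show (((-1):ℤ) : ℝ) < ((0:ℤ) : ℝ); norm_num
              · show ((0:ℤ) : ℝ) < ((p.1 : ℤ) : ℝ); exact_mod_cast (by omega : (0:ℤ) < p.1)
            omega
          · have h0 : p.2 = 2 := by omega
            have := htr p hp h0; omega
        · -- lo = 0
          refine ⟨0, ?_⟩
          intro p hp
          obtain ⟨hp0, hpw⟩ := hS p hp
          rcases lt_trichotomy p.2 1 with h2 | h2 | h2
          · have h0 : p.2 = 0 := by omega
            have := hbr p hp h0; omega
          · obtain ⟨hu, hl⟩ := hrow p hp (by omega) (by omega)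
            rw [hm0] at hu hl
            have hne : p.1 ≠ -1 := by
              intro h1'
              apply hneg
              have : p = (p.1, p.2) := rfl
              rw [this, h1', h2] at hp
              exact hp
            omega
          · have h0 : p.2 = 2 := by omega
            have := htr p hp h0; omega
      · -- m = 1 : then τ = 0
        have hτ0' : τ = 0 := by
          by_contra hcon
          exact hpar ⟨by omega, hm1⟩
        refine ⟨0, ?_⟩
        intro p hp
        obtain ⟨hp0, hpw⟩ := hS p hp
        rcases lt_trichotomy p.2 1 with h2 | h2 | h2
        · have h0 : p.2 = 0 := by omega
          have := hbr p hp h0; omega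
        · obtain ⟨hu, hl⟩ := hrow p hp (by omega) (by omega)
          rw [hm1] at hu hl
          omega
        · have h0 : p.2 = 2 := by omega
          have := htr p hp h0; omega
  · -- w ≥ 3 case
    have hβ1 : β ≤ 1 := by nlinarith
    have hτ1 : τ ≤ 1 := le_trans hτβ hβ1
    left
    rcases lt_trichotomy m 0 with hm | hm0 | hm
    · -- m < 0, lo = m
      refine ⟨m, ?_⟩
      intro p hp
      obtain ⟨hp0, hpw⟩ := hS p hp
      rcases eq_or_lt_of_le hp0 with h0 | h0
      · have := hbr p hp h0.symm; omega
      rcases eq_or_lt_of_le hpw with hww | hww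
      · have := htr p hp hww; omega
      obtain ⟨hu, hl⟩ := hrow p hp (by omega) (by omega)
      constructor
      · nlinarith [mul_nonneg (show (0:ℤ) ≤ w - 1 - p.2 by omega) (show (0:ℤ) ≤ -m by omega)]
      · nlinarith [mul_nonneg (show (0:ℤ) ≤ p.2 - 1 by omega) (show (0:ℤ) ≤ -m by omega)]
    · -- m = 0, lo = -1
      refine ⟨-1, ?_⟩
      intro p hp
      obtain ⟨hp0, hpw⟩ := hS p hp
      rcases eq_or_lt_of_le hp0 with h0 | h0
      · have := hbr p hp h0.symm; omega
      rcases eq_or_lt_of_le hpw with hww | hww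
      · have := htr p hp hww; omega
      obtain ⟨hu, hl⟩ := hrow p hp (by omega) (by omega)
      rw [hm0] at hu hl
      constructor
      · nlinarith
      · nlinarith
    · -- m > 0, lo = 0
      refine ⟨0, ?_⟩
      intro p hp
      obtain ⟨hp0, hpw⟩ := hS p hp
      rcases eq_or_lt_of_le hp0 with h0 | h0
      · have := hbr p hp h0.symm; omega
      rcases eq_or_lt_of_le hpw with hww | hww
      · have := htr p hp hww; omega
      obtain ⟨hu, hl⟩ := hrow p hp (by omega) (by omega)
      constructor
      · nlinarith [mul_nonneg (show (0:ℤ) ≤ p.2 - 1 by omega) (show (0:ℤ) ≤ m by omega)]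
      · nlinarith [mul_nonneg (show (0:ℤ) ≤ w - 1 - p.2 by omega) (show (0:ℤ) ≤ m by omega),
          (show 2 * m ≤ w from hm2)]
def Concl (Q : Set (ℝ × ℝ)) : Prop :=
  UnimodEquiv Q twiceStdTriangle ∨
    ∃ Q' : Set (ℝ × ℝ), IsLatticePolygon Q' ∧
      Q' ⊆ (Set.univ : Set ℝ) ×ˢ Set.Icc (0 : ℝ) 1 ∧ UnimodEquiv Q Q'

def Hyps (w : ℕ) (S : Finset (ℤ × ℤ)) (Q : Set (ℝ × ℝ)) : Prop :=
  Q = convexHull ℝ (latticePt '' (S : Set (ℤ × ℤ))) ∧ (interior Q).Nonempty ∧ IsHollow Q ∧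
    ∀ p ∈ S, 0 ≤ p.2 ∧ p.2 ≤ (w : ℤ)

lemma conclusion_transfer {Q Q₁ : Set (ℝ × ℝ)} (h : UnimodEquiv Q Q₁) (hc : Concl Q₁) :
    Concl Q := by
  rcases hc with h1 | ⟨Q', hp, hs, he⟩
  · exact Or.inl (unimodEquiv_trans h h1)
  · exact Or.inr ⟨Q', hp, hs, unimodEquiv_trans h he⟩

lemma umap_one_image (Q : Set (ℝ × ℝ)) : umap 1 0 0 1 0 0 '' Q = Q := by
  have he : umap 1 0 0 1 0 0 = id := by
    funext z
    simp [umap]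
  rw [he, Set.image_id]

lemma unimodEquiv_refl (Q : Set (ℝ × ℝ)) : UnimodEquiv Q Q :=
  ⟨1, 0, 0, 1, 0, 0, Or.inl (by ring), (umap_one_image Q).symm⟩

lemma mem_triangle (z : ℝ × ℝ) (h1 : 0 ≤ z.1) (h2 : 0 ≤ z.2) (h3 : z.1 + z.2 ≤ 2) :
    z ∈ convexHull ℝ {((0 : ℝ), (0 : ℝ)), ((2 : ℝ), (0 : ℝ)), ((0 : ℝ), (2 : ℝ))} := by
  set T := convexHull ℝ {((0 : ℝ), (0 : ℝ)), ((2 : ℝ), (0 : ℝ)), ((0 : ℝ), (2 : ℝ))} with hT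
  have hconv : Convex ℝ T := convex_convexHull ℝ _
  have h00 : ((0:ℝ), (0:ℝ)) ∈ T := subset_convexHull _ _ (by simp)
  have h20 : ((2:ℝ), (0:ℝ)) ∈ T := subset_convexHull _ _ (by simp)
  have h02 : ((0:ℝ), (2:ℝ)) ∈ T := subset_convexHull _ _ (by simp)
  set s : ℝ := z.1 + z.2 with hs
  rcases eq_or_lt_of_le (by linarith : (0:ℝ) ≤ s) with h0 | h0
  · have hz1 : z.1 = 0 := by linarith
    have hz2 : z.2 = 0 := by linarith
    have : z = ((0:ℝ), (0:ℝ)) := Prod.ext hz1 hz2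
    rw [this]; exact h00
  · have hM : ((1 - z.2/s) • (((2:ℝ), (0:ℝ)) : ℝ × ℝ) + (z.2/s) • (((0:ℝ), (2:ℝ)) : ℝ × ℝ)) ∈ T := by
      apply hconv h20 h02
      · have : z.2/s ≤ 1 := by rw [div_le_one h0]; linarith
        linarith
      · positivity
      · ring
    have hfin := hconv h00 hM (by linarith : (0:ℝ) ≤ 1 - s/2)
      (by positivity : (0:ℝ) ≤ s/2) (by ring)
    convert hfin using 1
    have e1 : ((1 - s/2) • (((0:ℝ), (0:ℝ)) : ℝ × ℝ)
        + (s/2) • ((1 - z.2/s) • (((2:ℝ), (0:ℝ)) : ℝ × ℝ) + (z.2/s) • (((0:ℝ), (2:ℝ)) : ℝ × ℝ))).1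
        = (s/2) * ((1 - z.2/s) * 2) := by
      show (1 - s/2) * 0 + (s/2) * ((1 - z.2/s) * 2 + (z.2/s) * 0) = _
      ring
    have e2 : ((1 - s/2) • (((0:ℝ), (0:ℝ)) : ℝ × ℝ)
        + (s/2) • ((1 - z.2/s) • (((2:ℝ), (0:ℝ)) : ℝ × ℝ) + (z.2/s) • (((0:ℝ), (2:ℝ)) : ℝ × ℝ))).2
        = (s/2) * ((z.2/s) * 2) := by
      show (1 - s/2) * 0 + (s/2) * ((1 - z.2/s) * 0 + (z.2/s) * 2) = _
      ring
    refine Prod.ext ?_ ?_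
    · rw [e1]; field_simp; first
        | linear_combination (2*s) * hs
        | linear_combination (-2*s) * hs
        | ring
    · rw [e2]; field_simp; try ring
lemma row_bounds (S : Finset (ℤ × ℤ)) (y : ℤ) (hne : ∃ p ∈ S, p.2 = y) :
    ∃ lo hi : ℤ, ((lo, y) : ℤ × ℤ) ∈ S ∧ ((hi, y) : ℤ × ℤ) ∈ S ∧
      (∀ p ∈ S, p.2 = y → lo ≤ p.1 ∧ p.1 ≤ hi) ∧ lo ≤ hi := by
  classical
  set R := (S.filter (fun p => p.2 = y)).image Prod.fst with hR
  obtain ⟨p₀, hp₀, hp₀y⟩ := hne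
  have hRne : R.Nonempty := ⟨p₀.1, by
    rw [hR]
    exact Finset.mem_image_of_mem _ (Finset.mem_filter.2 ⟨hp₀, hp₀y⟩)⟩
  have hmemR : ∀ x ∈ R, ((x, y) : ℤ × ℤ) ∈ S := by
    intro x hx
    rw [hR] at hx
    obtain ⟨q, hq, rfl⟩ := Finset.mem_image.1 hx
    obtain ⟨hqS, hqy⟩ := Finset.mem_filter.1 hq
    have : q = (q.1, y) := Prod.ext rfl hqy
    rwa [← this]
  have hinR : ∀ p ∈ S, p.2 = y → p.1 ∈ R := by
    intro p hp hpy
    rw [hR]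
    exact Finset.mem_image_of_mem _ (Finset.mem_filter.2 ⟨hp, hpy⟩)
  refine ⟨R.min' hRne, R.max' hRne, hmemR _ (R.min'_mem hRne), hmemR _ (R.max'_mem hRne),
    ?_, R.min'_le _ (R.max'_mem hRne)⟩
  intro p hp hpy
  exact ⟨R.min'_le _ (hinR p hp hpy), R.le_max' _ (hinR p hp hpy)⟩

lemma snd_bounds (S : Finset (ℤ × ℤ)) (hne : S.Nonempty) :
    ∃ lo hi : ℤ, (∃ p ∈ S, p.2 = lo) ∧ (∃ p ∈ S, p.2 = hi) ∧
      (∀ p ∈ S, lo ≤ p.2 ∧ p.2 ≤ hi) ∧ lo ≤ hi := by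
  classical
  set R := S.image Prod.snd with hR
  have hRne : R.Nonempty := hne.image _
  have hmemR : ∀ x ∈ R, ∃ p ∈ S, p.2 = x := by
    intro x hx
    rw [hR] at hx
    obtain ⟨q, hq, rfl⟩ := Finset.mem_image.1 hx
    exact ⟨q, hq, rfl⟩
  refine ⟨R.min' hRne, R.max' hRne, hmemR _ (R.min'_mem hRne), hmemR _ (R.max'_mem hRne),
    ?_, R.min'_le _ (R.max'_mem hRne)⟩
  intro p hp
  exact ⟨R.min'_le _ (Finset.mem_image_of_mem _ hp), R.le_max' _ (Finset.mem_image_of_mem _ hp)⟩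
lemma step (w : ℕ) (hw2 : 2 ≤ (w : ℤ))
    (IH : ∀ m : ℕ, m < w → ∀ S Q, Hyps m S Q → Concl Q)
    (S : Finset (ℤ × ℤ)) (Q : Set (ℝ × ℝ)) (h : Hyps w S Q)
    (β τ m : ℤ) (hβ0 : 0 ≤ β) (hτ0 : 0 ≤ τ) (hτβ : τ ≤ β)
    (hb0 : ((0:ℤ),(0:ℤ)) ∈ S) (hb1 : ((β,(0:ℤ)) : ℤ×ℤ) ∈ S)
    (hbr : ∀ p ∈ S, p.2 = 0 → 0 ≤ p.1 ∧ p.1 ≤ β)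
    (ht0 : ((m,(w:ℤ)) : ℤ×ℤ) ∈ S) (ht1 : ((m+τ,(w:ℤ)) : ℤ×ℤ) ∈ S)
    (htr : ∀ p ∈ S, p.2 = (w:ℤ) → m ≤ p.1 ∧ p.1 ≤ m+τ)
    (hm1 : -(w:ℤ) < 2*m) (hm2 : 2*m ≤ (w:ℤ)) : Concl Q := by
  obtain ⟨hQ, hint, hhol, hS⟩ := h
  rcases core (w:ℤ) hw2 S Q hQ hhol hS β τ m hβ0 hτ0 hτβ hb0 hb1 hbr ht0 ht1 htr hm1 hm2 with
    ⟨lo, hbnd⟩ | ⟨hw2', hβ2, hτ2, hm0, hall⟩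
  · -- thin: swap coordinates, recurse
    have hdet : (0:ℤ) * 0 - 1 * 1 = 1 ∨ (0:ℤ) * 0 - 1 * 1 = -1 := Or.inr (by ring)
    set g : ℤ × ℤ → ℤ × ℤ := zmap 0 1 1 0 0 (-lo) with hg
    set Q₁ := umap 0 1 1 0 0 (-lo) '' Q with hQ₁def
    have hQ₁ : Q₁ = convexHull ℝ (latticePt '' ((S.image g : Finset (ℤ×ℤ)) : Set (ℤ×ℤ))) :=
      umap_image_polygon 0 1 1 0 0 (-lo) hdet hQ
    have hint₁ := umap_interior_nonempty 0 1 1 0 0 (-lo) hdet hint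
    have hhol₁ := umap_hollow 0 1 1 0 0 (-lo) hdet hhol
    have hS₁ : ∀ p ∈ S.image g, 0 ≤ p.2 ∧ p.2 ≤ ((w - 1 : ℕ) : ℤ) := by
      intro p hp
      obtain ⟨q, hq, rfl⟩ := Finset.mem_image.1 hp
      have hb := hbnd q hq
      have hcast : ((w - 1 : ℕ) : ℤ) = (w : ℤ) - 1 := by omega
      rw [hg]
      unfold zmap
      constructor <;> simp <;> omega
    have hc := IH (w-1) (by omega) (S.image g) Q₁ ⟨hQ₁, hint₁, hhol₁, hS₁⟩
    exact conclusion_transfer (unimodEquiv_of_umap 0 1 1 0 0 (-lo) hdet Q) hc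
  · -- the triangle
    left
    have hQT : Q = twiceStdTriangle := by
      rw [hQ]
      unfold twiceStdTriangle
      apply le_antisymm
      · apply convexHull_min ?_ (convex_convexHull ℝ _)
        rintro z ⟨p, hp, rfl⟩
        have hp' : p ∈ S := by simpa using hp
        have h1 := hall p hp'
        have h2 := (hS p hp').1
        refine mem_triangle (latticePt p) ?_ ?_ ?_
        · show (0:ℝ) ≤ (p.1 : ℝ); exact_mod_cast h1.1
        · show (0:ℝ) ≤ (p.2 : ℝ); exact_mod_cast h2
        · show (p.1 : ℝ) + (p.2 : ℝ) ≤ 2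
          have := h1.2
          push_cast
          exact_mod_cast this
      · apply convexHull_min ?_ (convex_convexHull ℝ _)
        intro z hz
        have hsub : z = ((0:ℝ),(0:ℝ)) ∨ z = ((2:ℝ),(0:ℝ)) ∨ z = ((0:ℝ),(2:ℝ)) := by
          simpa using hz
        have hmm : ∀ p ∈ S, latticePt p ∈ convexHull ℝ (latticePt '' (S : Set (ℤ×ℤ))) := by
          intro p hp
          exact subset_convexHull _ _ ⟨p, by simpa using hp, rfl⟩
        rcases hsub with rfl | rfl | rfl
        · have := hmm _ hb0
          simpa [latticePt] using this
        · have hb1' := hb1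
          rw [hβ2] at hb1'
          have := hmm _ hb1'
          simpa [latticePt] using this
        · have ht0' := ht0
          rw [hm0] at ht0'
          have hww : (w : ℤ) = 2 := hw2'
          rw [hww] at ht0'
          have := hmm _ ht0'
          simpa [latticePt] using this
    rw [hQT]
    exact unimodEquiv_refl _
lemma main : ∀ (w : ℕ) (S : Finset (ℤ × ℤ)) (Q : Set (ℝ × ℝ)), Hyps w S Q → Concl Q := by
  intro w
  induction w using Nat.strong_induction_on with
  | _ w IH =>
  intro S Q h
  obtain ⟨hQ, hint, hhol, hS⟩ := h
  have hSne : S.Nonempty := by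
    rcases S.eq_empty_or_nonempty with rfl | h
    · exfalso
      rw [Finset.coe_empty, Set.image_empty, convexHull_empty] at hQ
      rw [hQ, interior_empty] at hint
      exact Set.not_nonempty_empty hint
    · exact h
  obtain ⟨ylo, yhi, hylo, hyhi, hybnd, hyle⟩ := snd_bounds S hSne
  have hylo0 : 0 ≤ ylo := by
    obtain ⟨p, hp, hpe⟩ := hylo; have := hS p hp; omega
  have hyhiw : yhi ≤ (w:ℤ) := by
    obtain ⟨p, hp, hpe⟩ := hyhi; have := hS p hp; omega
  by_cases hnorm : ylo = 0 ∧ yhi = (w:ℤ)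
  case neg =>
    have hlt : yhi - ylo < (w:ℤ) := by omega
    have hdet : (1:ℤ) * 1 - 0 * 0 = 1 ∨ (1:ℤ) * 1 - 0 * 0 = -1 := Or.inl (by ring)
    have hQ₁ := umap_image_polygon 1 0 0 1 0 (-ylo) hdet hQ
    have hint₁ := umap_interior_nonempty 1 0 0 1 0 (-ylo) hdet hint
    have hhol₁ := umap_hollow 1 0 0 1 0 (-ylo) hdet hhol
    have hS₁ : ∀ p ∈ S.image (zmap 1 0 0 1 0 (-ylo)), 0 ≤ p.2 ∧ p.2 ≤ (((yhi - ylo).toNat : ℕ) : ℤ) := by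
      intro p hp
      obtain ⟨q, hq, rfl⟩ := Finset.mem_image.1 hp
      have hb := hybnd q hq
      simp only [zmap]
      omega
    have hc := IH (yhi - ylo).toNat (by omega) _ _ ⟨hQ₁, hint₁, hhol₁, hS₁⟩
    exact conclusion_transfer (unimodEquiv_of_umap 1 0 0 1 0 (-ylo) hdet Q) hc
  case pos =>
  obtain ⟨hylo', hyhi'⟩ := hnorm
  rcases Nat.lt_or_ge w 2 with hwlt | hw2
  · rcases Nat.lt_or_ge w 1 with hw0 | hw1
    · -- w = 0 : impossible
      exfalso
      have hw0' : (w:ℤ) = 0 := by omega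
      have hup : ∀ z ∈ Q, (0:ℝ) * z.1 + 1 * z.2 ≤ 0 := by
        rw [hQ]
        apply hull_le
        rintro z ⟨p, hp, rfl⟩
        have := hS p hp
        show (0:ℝ) * (p.1:ℝ) + 1 * (p.2:ℝ) ≤ 0
        have : (p.2 : ℝ) ≤ 0 := by exact_mod_cast (by omega : p.2 ≤ 0)
        linarith
      have hdn : ∀ z ∈ Q, (0:ℝ) * z.1 + (-1) * z.2 ≤ 0 := by
        rw [hQ]
        apply hull_le
        rintro z ⟨p, hp, rfl⟩
        have := hS p hp
        show (0:ℝ) * (p.1:ℝ) + (-1) * (p.2:ℝ) ≤ 0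
        have : (0:ℝ) ≤ (p.2 : ℝ) := by exact_mod_cast (by omega : 0 ≤ p.2)
        linarith
      have hsub : Q ⊆ (Set.univ : Set ℝ) ×ˢ Set.Icc (0:ℝ) 0 := by
        intro z hz
        refine ⟨trivial, ⟨?_, ?_⟩⟩
        · have := hdn z hz; linarith
        · have := hup z hz; linarith
      have h1 : interior Q ⊆ interior ((Set.univ : Set ℝ) ×ˢ Set.Icc (0:ℝ) 0) :=
        interior_mono hsub
      rw [interior_prod_eq, Set.Icc_self, interior_singleton] at h1
      obtain ⟨z, hz⟩ := hint
      have := h1 hz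
      simp at this
    · -- w = 1 : strip case
      have hw1' : (w:ℤ) = 1 := by omega
      right
      refine ⟨Q, ⟨⟨S, hQ⟩, hint⟩, ?_, unimodEquiv_refl Q⟩
      intro z hz
      have hup : ∀ z ∈ Q, (0:ℝ) * z.1 + 1 * z.2 ≤ 1 := by
        rw [hQ]
        apply hull_le
        rintro z ⟨p, hp, rfl⟩
        have := hS p hp
        show (0:ℝ) * (p.1:ℝ) + 1 * (p.2:ℝ) ≤ 1
        have : (p.2 : ℝ) ≤ 1 := by exact_mod_cast (by omega : p.2 ≤ 1)
        linarith
      have hdn : ∀ z ∈ Q, (0:ℝ) * z.1 + (-1) * z.2 ≤ 0 := by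
        rw [hQ]
        apply hull_le
        rintro z ⟨p, hp, rfl⟩
        have := hS p hp
        show (0:ℝ) * (p.1:ℝ) + (-1) * (p.2:ℝ) ≤ 0
        have : (0:ℝ) ≤ (p.2 : ℝ) := by exact_mod_cast (by omega : 0 ≤ p.2)
        linarith
      refine ⟨trivial, ⟨?_, ?_⟩⟩
      · have := hdn z hz; linarith
      · have := hup z hz; linarith
  · -- w ≥ 2
    have hw2' : (2:ℤ) ≤ (w:ℤ) := by exact_mod_cast hw2
    obtain ⟨b₀, b₁, hb₀, hb₁, hbr, hble⟩ := row_bounds S 0 (by rw [← hylo']; exact hylo)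
    obtain ⟨t₀, t₁, ht₀, ht₁, htr, htle⟩ := row_bounds S ((w:ℕ):ℤ) (by rw [← hyhi']; exact hyhi)
    by_cases hflip : t₁ - t₀ ≤ b₁ - b₀
    · -- no flip : shear + translate
      obtain ⟨n, hn1, hn2⟩ := shear_exists (w:ℤ) (t₀ - b₀) (by omega)
      have hdet : (1:ℤ) * 1 - n * 0 = 1 ∨ (1:ℤ) * 1 - n * 0 = -1 := Or.inl (by ring)
      have hQ₁ := umap_image_polygon 1 n 0 1 (-b₀) 0 hdet hQ
      have hint₁ := umap_interior_nonempty 1 n 0 1 (-b₀) 0 hdet hint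
      have hhol₁ := umap_hollow 1 n 0 1 (-b₀) 0 hdet hhol
      set g : ℤ × ℤ → ℤ × ℤ := zmap 1 n 0 1 (-b₀) 0 with hg
      have hS₁ : ∀ p ∈ S.image g, 0 ≤ p.2 ∧ p.2 ≤ ((w:ℕ):ℤ) := by
        intro p hp
        obtain ⟨q, hq, rfl⟩ := Finset.mem_image.1 hp
        have := hS q hq
        rw [hg]; simp only [zmap]
        omega
      have hc : Concl (umap 1 n 0 1 (-b₀) 0 '' Q) := by
        apply step w hw2' IH (S.image g) _ ⟨hQ₁, hint₁, hhol₁, hS₁⟩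
          (b₁ - b₀) (t₁ - t₀) (t₀ - b₀ + n * (w:ℤ)) (by omega) (by omega) (by omega)
        · exact Finset.mem_image.2 ⟨(b₀, 0), hb₀, by
            rw [hg]; simp only [zmap, Prod.ext_iff]; constructor <;> ring⟩
        · exact Finset.mem_image.2 ⟨(b₁, 0), hb₁, by
            rw [hg]; simp only [zmap, Prod.ext_iff]; constructor <;> ring⟩
        · intro p hp hp2
          obtain ⟨q, hq, rfl⟩ := Finset.mem_image.1 hp
          rw [hg] at hp2 ⊢
          simp only [zmap] at hp2 ⊢
          have hq2 : q.2 = 0 := by omega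
          have := hbr q hq hq2
          rw [hq2]
          omega
        · exact Finset.mem_image.2 ⟨(t₀, (w:ℤ)), ht₀, by
            rw [hg]; simp only [zmap, Prod.ext_iff]; constructor <;> ring⟩
        · exact Finset.mem_image.2 ⟨(t₁, (w:ℤ)), ht₁, by
            rw [hg]; simp only [zmap, Prod.ext_iff]; constructor <;> ring⟩
        · intro p hp hp2
          obtain ⟨q, hq, rfl⟩ := Finset.mem_image.1 hp
          rw [hg] at hp2 ⊢
          simp only [zmap] at hp2 ⊢
          have hq2 : q.2 = (w:ℤ) := by omega
          have := htr q hq hq2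
          rw [hq2]
          set K := n * (w:ℤ) with hK
          omega
        · exact hn1
        · exact hn2
      exact conclusion_transfer (unimodEquiv_of_umap 1 n 0 1 (-b₀) 0 hdet Q) hc
    · -- flip
      obtain ⟨n, hn1, hn2⟩ := shear_exists (w:ℤ) (b₀ - t₀) (by omega)
      have hdet : (1:ℤ) * (-1) - (-n) * 0 = 1 ∨ (1:ℤ) * (-1) - (-n) * 0 = -1 := Or.inr (by ring)
      have hQ₁ := umap_image_polygon 1 (-n) 0 (-1) (n * (w:ℤ) - t₀) (w:ℤ) hdet hQ
      have hint₁ := umap_interior_nonempty 1 (-n) 0 (-1) (n * (w:ℤ) - t₀) (w:ℤ) hdet hint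
      have hhol₁ := umap_hollow 1 (-n) 0 (-1) (n * (w:ℤ) - t₀) (w:ℤ) hdet hhol
      set g : ℤ × ℤ → ℤ × ℤ := zmap 1 (-n) 0 (-1) (n * (w:ℤ) - t₀) (w:ℤ) with hg
      have hS₁ : ∀ p ∈ S.image g, 0 ≤ p.2 ∧ p.2 ≤ ((w:ℕ):ℤ) := by
        intro p hp
        obtain ⟨q, hq, rfl⟩ := Finset.mem_image.1 hp
        have := hS q hq
        rw [hg]; simp only [zmap]
        omega
      have hc : Concl (umap 1 (-n) 0 (-1) (n * (w:ℤ) - t₀) (w:ℤ) '' Q) := by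
        apply step w hw2' IH (S.image g) _ ⟨hQ₁, hint₁, hhol₁, hS₁⟩
          (t₁ - t₀) (b₁ - b₀) (b₀ - t₀ + n * (w:ℤ)) (by omega) (by omega) (by omega)
        · exact Finset.mem_image.2 ⟨(t₀, (w:ℤ)), ht₀, by
            rw [hg]; simp only [zmap, Prod.ext_iff]; constructor <;> ring⟩
        · exact Finset.mem_image.2 ⟨(t₁, (w:ℤ)), ht₁, by
            rw [hg]; simp only [zmap, Prod.ext_iff]; constructor <;> ring⟩
        · intro p hp hp2
          obtain ⟨q, hq, rfl⟩ := Finset.mem_image.1 hp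
          rw [hg] at hp2 ⊢
          simp only [zmap] at hp2 ⊢
          have hq2 : q.2 = (w:ℤ) := by omega
          have := htr q hq hq2
          rw [hq2]
          set K := n * (w:ℤ) with hK
          have hKK : (-n) * ((w:ℕ):ℤ) = -K := by rw [hK]; ring
          try rw [hKK]
          try simp only [mul_zero, mul_one, add_zero, zero_add]
          omega
        · exact Finset.mem_image.2 ⟨(b₀, 0), hb₀, by
            rw [hg]; simp only [zmap, Prod.ext_iff]; constructor <;> ring⟩
        · exact Finset.mem_image.2 ⟨(b₁, 0), hb₁, by
            rw [hg]; simp only [zmap, Prod.ext_iff]; constructor <;> ring⟩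
        · intro p hp hp2
          obtain ⟨q, hq, rfl⟩ := Finset.mem_image.1 hp
          rw [hg] at hp2 ⊢
          simp only [zmap] at hp2 ⊢
          have hq2 : q.2 = 0 := by omega
          have := hbr q hq hq2
          rw [hq2]
          set K := n * (w:ℤ) with hK
          have hKK : (-n) * ((w:ℕ):ℤ) = -K := by rw [hK]; ring
          try rw [hKK]
          try simp only [mul_zero, mul_one, add_zero, zero_add]
          omega
        · exact hn1
        · exact hn2
      exact conclusion_transfer (unimodEquiv_of_umap 1 (-n) 0 (-1) (n * (w:ℤ) - t₀) (w:ℤ) hdet Q) hc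

theorem hollow_polygon_classification (Q : Set (ℝ × ℝ))
    (hQ : IsLatticePolygon Q) (hhollow : IsHollow Q) :
    UnimodEquiv Q twiceStdTriangle ∨
      ∃ Q' : Set (ℝ × ℝ), IsLatticePolygon Q' ∧
        Q' ⊆ (Set.univ : Set ℝ) ×ˢ Set.Icc (0 : ℝ) 1 ∧ UnimodEquiv Q Q' := by
  obtain ⟨⟨S, hQS⟩, hint⟩ := hQ
  have hSne : S.Nonempty := by
    rcases S.eq_empty_or_nonempty with rfl | h
    · exfalso
      rw [Finset.coe_empty, Set.image_empty, convexHull_empty] at hQS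
      rw [hQS, interior_empty] at hint
      exact Set.not_nonempty_empty hint
    · exact h
  obtain ⟨ylo, yhi, hylo, hyhi, hybnd, hyle⟩ := snd_bounds S hSne
  -- translate so that heights start at 0
  have hdet : (1:ℤ) * 1 - 0 * 0 = 1 ∨ (1:ℤ) * 1 - 0 * 0 = -1 := Or.inl (by ring)
  have hQ₁ := umap_image_polygon 1 0 0 1 0 (-ylo) hdet hQS
  have hint₁ := umap_interior_nonempty 1 0 0 1 0 (-ylo) hdet hint
  have hhol₁ := umap_hollow 1 0 0 1 0 (-ylo) hdet hhollow
  have hS₁ : ∀ p ∈ S.image (zmap 1 0 0 1 0 (-ylo)), 0 ≤ p.2 ∧ p.2 ≤ (((yhi - ylo).toNat : ℕ) : ℤ) := by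
    intro p hp
    obtain ⟨q, hq, rfl⟩ := Finset.mem_image.1 hp
    have hb := hybnd q hq
    simp only [zmap]
    omega
  have hc := main (yhi - ylo).toNat _ _ ⟨hQ₁, hint₁, hhol₁, hS₁⟩
  exact conclusion_transfer (unimodEquiv_of_umap 1 0 0 1 0 (-ylo) hdet Q) hc
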